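/- With B, D, E as in the rank-one dressing construction (B = |z⟩⟨y| as above with ζ_j² ≠ ζ̄_j²), the matrices D(ζ) and E(ζ) are mutually inverse for all ζ ∉ {±ζ_j, ±ζ̄_j}: D(ζ)E(ζ) = I. -/

import Mathlib

open Matrix Filter Topology ComplexConjugate

noncomputable section

attribute [local instance] Matrix.normedAddCommGroup Matrix.normedSpace

abbrev M2 := Matrix (Fin 2) (Fin 2) ℂ

def σ3 : M2 := !![1, 0; 0, -1]

def σ2 : M2 := !![0, -Complex.I; Complex.I, 0]

/-- A 2×2 matrix is diagonal if its off-diagonal entries vanish. -/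
def IsDiag2 (A : M2) : Prop := A 0 1 = 0 ∧ A 1 0 = 0

/-- A 2×2 matrix is off-diagonal if its diagonal entries vanish. -/
def IsOffDiag2 (A : M2) : Prop := A 0 0 = 0 ∧ A 1 1 = 0

set_option maxHeartbeats 1000000 in
lemma s3_conj (M : M2) : σ3 * M * σ3 = !![M 0 0, -(M 0 1); -(M 1 0), M 1 1] := by
  ext i j
  fin_cases i <;> fin_cases j <;>
    simp [σ3, Matrix.mul_apply, Matrix.vecMul, dotProduct, Fin.sum_univ_two, Matrix.of_apply] <;> ring

set_option maxHeartbeats 2000000 in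
/-- The rank-one dressing factors `D(ζ)` and `E(ζ) = D⁻¹(ζ)` are mutually inverse. -/
theorem stmt7
    (zj : ℂ) (hzj : zj ^ 2 ≠ (conj zj) ^ 2)
    (y : Fin 2 → ℂ) (hy : y ≠ 0)
    (α : ℂ) (hα : α * (zj * y 0 * conj (y 0) + conj zj * y 1 * conj (y 1)) = 1)
    (z : Fin 2 → ℂ)
    (hz0 : z 0 = (zj ^ 2 - (conj zj) ^ 2) / 2 * α * conj (y 0))
    (hz1 : z 1 = (zj ^ 2 - (conj zj) ^ 2) / 2 * conj α * conj (y 1))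
    (B : M2) (hB : B = Matrix.vecMulVec z y)
    (E : ℂ → M2)
    (hE : ∀ w : ℂ, E w = 1 + (w - conj zj)⁻¹ • Bᴴ - (w + conj zj)⁻¹ • (σ3 * Bᴴ * σ3))
    (D : ℂ → M2)
    (hD : ∀ w : ℂ, D w = 1 + (w - zj)⁻¹ • B - (w + zj)⁻¹ • (σ3 * B * σ3)) :
    ∀ w : ℂ, w ≠ zj → w ≠ -zj → w ≠ conj zj → w ≠ -conj zj → D w * E w = 1 := by
  intro w hw1 hw2 hw3 hw4
  have hS : zj * y 0 * conj (y 0) + conj zj * y 1 * conj (y 1) ≠ 0 :=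
    right_ne_zero_of_mul_eq_one hα
  have ha : α = (zj * y 0 * conj (y 0) + conj zj * y 1 * conj (y 1))⁻¹ :=
    eq_inv_of_mul_eq_one_left hα
  have h2 := congrArg (starRingEnd ℂ) hα
  simp only [_root_.map_mul, _root_.map_add, _root_.map_one, Complex.conj_conj] at h2
  have hSp : conj zj * conj (y 0) * y 0 + zj * conj (y 1) * y 1 ≠ 0 :=
    right_ne_zero_of_mul_eq_one h2
  have hab : conj α = (conj zj * conj (y 0) * y 0 + zj * conj (y 1) * y 1)⁻¹ :=
    eq_inv_of_mul_eq_one_left h2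
  have d1 : w - zj ≠ 0 := sub_ne_zero.mpr hw1
  have d2 : w + zj ≠ 0 := fun h => hw2 (by linear_combination h)
  have d3 : w - conj zj ≠ 0 := sub_ne_zero.mpr hw3
  have d4 : w + conj zj ≠ 0 := fun h => hw4 (by linear_combination h)
  have hBH : Bᴴ = Matrix.vecMulVec (fun i => conj (y i)) (fun i => conj (z i)) := by
    rw [hB]; ext i j
    simp [Matrix.vecMulVec_apply, mul_comm]
  have hcz0 : conj (z 0) = ((conj zj) ^ 2 - zj ^ 2) / 2 * conj α * y 0 := by
    rw [hz0]
    simp only [_root_.map_mul, map_div₀, map_sub, map_pow, Complex.conj_conj, _root_.map_ofNat]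
  have hcz1 : conj (z 1) = ((conj zj) ^ 2 - zj ^ 2) / 2 * α * y 1 := by
    rw [hz1]
    simp only [_root_.map_mul, map_div₀, map_sub, map_pow, Complex.conj_conj, _root_.map_ofNat]
  have hDw : D w = !![1 + ((w - zj)⁻¹ - (w + zj)⁻¹) * (z 0 * y 0),
      ((w - zj)⁻¹ + (w + zj)⁻¹) * (z 0 * y 1);
      ((w - zj)⁻¹ + (w + zj)⁻¹) * (z 1 * y 0),
      1 + ((w - zj)⁻¹ - (w + zj)⁻¹) * (z 1 * y 1)] := by
    rw [hD w, hB, s3_conj]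
    ext i j
    fin_cases i <;> fin_cases j <;>
      simp [Matrix.vecMulVec_apply, Matrix.one_apply, Matrix.of_apply] <;> ring
  have hEw : E w = !![1 + ((w - conj zj)⁻¹ - (w + conj zj)⁻¹) * (conj (y 0) * conj (z 0)),
      ((w - conj zj)⁻¹ + (w + conj zj)⁻¹) * (conj (y 0) * conj (z 1));
      ((w - conj zj)⁻¹ + (w + conj zj)⁻¹) * (conj (y 1) * conj (z 0)),
      1 + ((w - conj zj)⁻¹ - (w + conj zj)⁻¹) * (conj (y 1) * conj (z 1))] := by
    rw [hE w, hBH, s3_conj]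
    ext i j
    fin_cases i <;> fin_cases j <;>
      simp [Matrix.vecMulVec_apply, Matrix.one_apply, Matrix.of_apply] <;> ring
  rw [hDw, hEw, Matrix.mul_fin_two, Matrix.one_fin_two]
  rw [hcz0, hcz1, hz0, hz1, hab, ha]
  generalize hG1 : zj * y 0 * conj (y 0) + conj zj * y 1 * conj (y 1) = S1 at hS ⊢
  generalize hG2 : conj zj * conj (y 0) * y 0 + zj * conj (y 1) * y 1 = S2 at hSp ⊢
  ext i j
  fin_cases i <;> fin_cases j <;>
    simp only [Matrix.cons_val', Matrix.cons_val_zero, Matrix.cons_val_one, Matrix.head_cons,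
      Matrix.empty_val', Matrix.cons_val_fin_one, Matrix.head_fin_const, Matrix.of_apply,
      Fin.mk_zero, Fin.mk_one, Fin.isValue] <;>
  field_simp <;>
  subst hG1 hG2 <;>
  ring
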